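/- Let P be an ambiguous pattern with at most 6 mines, and let S be an ambiguous grid state on the same grid that is consistent with P. Then S contains at most 5 flags. -/

import Mathlib

open scoped Classical

namespace Minesweeper

/-- The possible values of a cell in a grid state. -/
inductive CellState where
  | hidden : CellState
  | clue : Fin 9 → CellState
  | flag : CellState
  | mine : CellState
deriving DecidableEq

/-- The neighborhood of a cell: the cell itself together with all cells at
ℓ∞-distance 1 from it. -/
def nbhd {a b : ℕ} (c : Fin a × Fin b) : Finset (Fin a × Fin b) :=
  Finset.univ.filter (fun c' =>
    ((c.1 : ℤ) - (c'.1 : ℤ)).natAbs ≤ 1 ∧ ((c.2 : ℤ) - (c'.2 : ℤ)).natAbs ≤ 1)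

/-- The number of mines of `M` in the neighborhood of `c`. -/
def mineCount {a b : ℕ} (M : Fin a × Fin b → Bool) (c : Fin a × Fin b) : ℕ :=
  ((nbhd c).filter (fun c' => M c' = true)).card

/-- The total number of mines of a mine assignment. -/
def numMines {a b : ℕ} (M : Fin a × Fin b → Bool) : ℕ :=
  (Finset.univ.filter (fun c => M c = true)).card

/-- A mine assignment `M` and a grid state `S` are consistent. -/
def Consistent {a b : ℕ} (M : Fin a × Fin b → Bool) (S : Fin a × Fin b → CellState) : Prop :=
  ∀ c, S c = CellState.hidden
    ∨ (∃ k : Fin 9, S c = CellState.clue k ∧ (k : ℕ) = mineCount M c)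
    ∨ ((S c = CellState.flag ∨ S c = CellState.mine) ∧ M c = true)

/-- An algorithm assigns to every grid state having a hidden cell one of its hidden cells. -/
structure Algorithm (a b : ℕ) where
  move : (Fin a × Fin b → CellState) → Fin a × Fin b
  move_hidden : ∀ S : Fin a × Fin b → CellState,
    (∃ c, S c = CellState.hidden) → S (move S) = CellState.hidden

/-- Revealing the cell `c0`. -/
def reveal {a b : ℕ} (M : Fin a × Fin b → Bool) (S : Fin a × Fin b → CellState)
    (c0 : Fin a × Fin b) : Fin a × Fin b → CellState :=
  fun c => if c = c0 then
    (if M c0 = true then CellState.mine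
      else CellState.clue ⟨mineCount M c0 % 9, Nat.mod_lt _ (by norm_num)⟩)
    else S c

/-- The sequence of grid states obtained by running the algorithm `A` against the
mine assignment `M`, starting from the all-hidden state. -/
def gameState {a b : ℕ} (A : Algorithm a b) (M : Fin a × Fin b → Bool) :
    ℕ → (Fin a × Fin b → CellState)
  | 0 => fun _ => CellState.hidden
  | t + 1 => reveal M (gameState A M t) (A.move (gameState A M t))

/-- The algorithm `A` solves the mine assignment `M`. -/
def Solves {a b : ℕ} (A : Algorithm a b) (M : Fin a × Fin b → Bool) : Prop :=
  ∃ t : ℕ, (∀ c, gameState A M t c ≠ CellState.mine) ∧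
    (∀ c, gameState A M t c = CellState.hidden → M c = true)

/-- The probability of the event `E` under the random mine assignment on the `a × b` grid
in which each cell independently carries a mine with probability `p`. -/
noncomputable def mineProb (a b : ℕ) (p : ℝ) (E : Set (Fin a × Fin b → Bool)) : ℝ :=
  ∑ M : Fin a × Fin b → Bool,
    if M ∈ E then (∏ c : Fin a × Fin b, if M c = true then p else 1 - p) else 0

/-- The probability of the event `E` under the random mine assignment `M₀_p` that agrees
with `M₀` on the mines of `M₀` and puts a mine on each empty cell of `M₀` independently
with probability `p`. -/
noncomputable def mineProbAbove (a b : ℕ) (p : ℝ) (M₀ : Fin a × Fin b → Bool)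
    (E : Set (Fin a × Fin b → Bool)) : ℝ :=
  ∑ M : Fin a × Fin b → Bool,
    if M ∈ E then
      (∏ c : Fin a × Fin b,
        if M₀ c = true then (if M c = true then (1 : ℝ) else 0)
        else (if M c = true then p else 1 - p))
    else 0

/-- A pattern: no mines in the first/last two rows and columns, at least one mine in
the third and third-to-last rows and columns. -/
def IsPattern {h w : ℕ} (P : Fin h × Fin w → Bool) : Prop :=
  (∀ c, P c = true → 2 ≤ (c.1 : ℕ) ∧ (c.1 : ℕ) + 3 ≤ h ∧ 2 ≤ (c.2 : ℕ) ∧ (c.2 : ℕ) + 3 ≤ w)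
  ∧ (∃ c, P c = true ∧ (c.1 : ℕ) = 2) ∧ (∃ c, P c = true ∧ (c.1 : ℕ) + 3 = h)
  ∧ (∃ c, P c = true ∧ (c.2 : ℕ) = 2) ∧ (∃ c, P c = true ∧ (c.2 : ℕ) + 3 = w)

/-- An ambiguous grid state. -/
def AmbiguousState {a b : ℕ} (S : Fin a × Fin b → CellState) : Prop :=
  (∃ c, S c = CellState.hidden) ∧ (∀ c, S c ≠ CellState.mine) ∧
  ∀ c, S c = CellState.hidden →
    ∃ P P' : Fin a × Fin b → Bool, IsPattern P ∧ IsPattern P' ∧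
      Consistent P S ∧ Consistent P' S ∧ P c = true ∧ P' c = false

/-- An ambiguous pattern: a pattern consistent with some ambiguous grid state. -/
def AmbiguousPattern {a b : ℕ} (P : Fin a × Fin b → Bool) : Prop :=
  IsPattern P ∧ ∃ S : Fin a × Fin b → CellState, AmbiguousState S ∧ Consistent P S

/-- The pattern `P1` (rows and columns numbered from 0 to 7 here). -/
def P1 : Fin 8 × Fin 8 → Bool := fun c =>
  decide (((c.1 : ℕ), (c.2 : ℕ)) ∈ [(2,2),(2,5),(5,2),(5,5),(3,3),(4,4)])

/-- The pattern `P2` (rows and columns numbered from 0 to 7 here). -/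
def P2 : Fin 8 × Fin 8 → Bool := fun c =>
  decide (((c.1 : ℕ), (c.2 : ℕ)) ∈ [(2,2),(2,5),(5,2),(5,5),(3,4),(4,3)])

/-- `M` contains an occurrence of the pattern `P` at offset `(r, s)`. -/
def ContainsAt {a b h w : ℕ} (M : Fin a × Fin b → Bool) (P : Fin h × Fin w → Bool)
    (r s : ℕ) : Prop :=
  ∃ (hr : r + h ≤ a) (hs : s + w ≤ b),
    ∀ (i : Fin h) (j : Fin w), M (⟨r + i, by omega⟩, ⟨s + j, by omega⟩) = P (i, j)

/-- `M` contains an occurrence of the pattern `P`. -/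
def Contains {a b h w : ℕ} (M : Fin a × Fin b → Bool) (P : Fin h × Fin w → Bool) : Prop :=
  ∃ r s, ContainsAt M P r s

/-- The number of occurrences of the pattern `P` in `M`. -/
noncomputable def numOcc {a b h w : ℕ} (M : Fin a × Fin b → Bool)
    (P : Fin h × Fin w → Bool) : ℕ :=
  ((Finset.range a ×ˢ Finset.range b).filter (fun rs => ContainsAt M P rs.1 rs.2)).card

/-- The envelope of a grid state: the union of the neighborhoods of its hidden cells. -/
noncomputable def envelope {a b : ℕ} (S : Fin a × Fin b → CellState) :
    Finset (Fin a × Fin b) :=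
  Finset.univ.filter (fun c => ∃ c', S c' = CellState.hidden ∧ c ∈ nbhd c')

/-- The number of flags of `S` in the neighborhood of `c`. -/
def flagCount {a b : ℕ} (S : Fin a × Fin b → CellState) (c : Fin a × Fin b) : ℕ :=
  ((nbhd c).filter (fun c' => S c' = CellState.flag)).card

/-- The number of hidden cells of `S` in the neighborhood of `c`. -/
def hiddenCount {a b : ℕ} (S : Fin a × Fin b → CellState) (c : Fin a × Fin b) : ℕ :=
  ((nbhd c).filter (fun c' => S c' = CellState.hidden)).card

/-- A border cell of the envelope of `S`. -/
noncomputable def IsBorderCell {a b : ℕ} (S : Fin a × Fin b → CellState)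
    (c : Fin a × Fin b) : Prop :=
  c ∈ envelope S ∧ ((nbhd c).filter (fun c' => c' ∈ envelope S)).card < 9

/-- The orthogonal (horizontal/vertical) neighbors of a cell. -/
def orthNbrs {a b : ℕ} (c : Fin a × Fin b) : Finset (Fin a × Fin b) :=
  (nbhd c).filter (fun c' => c' ≠ c ∧ (c'.1 = c.1 ∨ c'.2 = c.2))

/-- A corner cell of the envelope of `S`: a border cell at least two of whose orthogonal
neighbors lie outside the envelope. -/
noncomputable def IsCornerCell {a b : ℕ} (S : Fin a × Fin b → CellState)
    (c : Fin a × Fin b) : Prop :=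
  IsBorderCell S c ∧ 2 ≤ ((orthNbrs c).filter (fun c' => c' ∉ envelope S)).card

/-- The number of mines of `M` in the `100 × 100` subgrid with upper-left offset `(r, s)`. -/
def subgridMineCount {a b : ℕ} (M : Fin a × Fin b → Bool) (r s : ℕ) : ℕ :=
  (Finset.univ.filter (fun c : Fin a × Fin b =>
    M c = true ∧ r ≤ (c.1 : ℕ) ∧ (c.1 : ℕ) < r + 100 ∧ s ≤ (c.2 : ℕ) ∧ (c.2 : ℕ) < s + 100)).card

/-- The cells revealed when starting from the upper-left corner and iteratively revealing
every cell in the neighborhood of a revealed cell with value 0. -/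
inductive Revealed {a b : ℕ} (M : Fin a × Fin b → Bool) : Fin a × Fin b → Prop where
  | corner (c : Fin a × Fin b) : (c.1 : ℕ) = 0 → (c.2 : ℕ) = 0 → Revealed M c
  | step (c c' : Fin a × Fin b) : Revealed M c → M c = false → mineCount M c = 0 →
      c' ∈ nbhd c → Revealed M c'

/-- A cell whose value in the auto-revealed grid state `S_{n,p}` is not the clue 0. -/
def NonzeroCell {a b : ℕ} (M : Fin a × Fin b → Bool) (c : Fin a × Fin b) : Prop :=
  ¬(Revealed M c ∧ M c = false ∧ mineCount M c = 0)

/-- Two cells lie in the same island of the auto-revealed grid state `S_{n,p}`: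
they are joined by a path of non-zero cells, consecutive ones at ℓ∞-distance 1. -/
def SameIsland {a b : ℕ} (M : Fin a × Fin b → Bool) (c c' : Fin a × Fin b) : Prop :=
  Relation.ReflTransGen
    (fun x y => NonzeroCell M x ∧ NonzeroCell M y ∧ x ≠ y ∧ y ∈ nbhd x) c c'

/-- The mine assignment at time `t` of the random mine process encoded by the
bijection `f` (the mine added at time `i + 1` is at cell `f i`). -/
def procAssign {a b : ℕ} (f : Fin (a * b) → Fin a × Fin b) (t : ℕ) :
    Fin a × Fin b → Bool :=
  fun c => decide (∃ i : Fin (a * b), (i : ℕ) < t ∧ f i = c)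

/-- The probability of the event `E` for the random mine process, realized as a uniformly
random bijective ordering of the cells of the grid. -/
noncomputable def procProb (a b : ℕ) (E : Set (Fin (a * b) → Fin a × Fin b)) : ℝ :=
  ((Finset.univ.filter
      (fun f : Fin (a * b) → Fin a × Fin b => Function.Bijective f ∧ f ∈ E)).card : ℝ) /
  ((Finset.univ.filter
      (fun f : Fin (a * b) → Fin a × Fin b => Function.Bijective f)).card : ℝ)

/-- The hitting time `τ`: the first time `t` at which the process contains an occurrence
of `P1` or `P2` (`⊤` if there is no such time). -/
noncomputable def tauProc {a b : ℕ} (f : Fin (a * b) → Fin a × Fin b) : ℕ∞ :=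
  sInf ((fun t : ℕ => (t : ℕ∞)) ''
    {t | Contains (procAssign f t) P1 ∨ Contains (procAssign f t) P2})


/-- Auxiliary: a nonempty finset of grid cells has a row-major (lexicographic) minimum. -/
lemma exists_lexmin {a b : ℕ} (H : Finset (Fin a × Fin b)) (h : H.Nonempty) :
    ∃ h0 ∈ H, ∀ x ∈ H, ((h0.1 : ℕ) ≤ (x.1 : ℕ)) ∧
      ((x.1 : ℕ) = (h0.1 : ℕ) → (h0.2 : ℕ) ≤ (x.2 : ℕ)) := by
  classical
  have hRne : (H.image (fun c => (c.1 : ℕ))).Nonempty := h.image _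
  have hH₁ne : (H.filter (fun c => (c.1 : ℕ) = (H.image (fun c => (c.1 : ℕ))).min' hRne)).Nonempty := by
    obtain ⟨x, hx, hxr⟩ := Finset.mem_image.1 (Finset.min'_mem _ hRne)
    exact ⟨x, Finset.mem_filter.2 ⟨hx, hxr⟩⟩
  obtain ⟨h0, hh0, hh0c⟩ := Finset.mem_image.1
    (Finset.min'_mem
      ((H.filter (fun c => (c.1 : ℕ) = (H.image (fun c => (c.1 : ℕ))).min' hRne)).image
        (fun c => (c.2 : ℕ)))
      (hH₁ne.image _))
  have hh0H : h0 ∈ H := (Finset.mem_filter.1 hh0).1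
  have hh0r : (h0.1 : ℕ) = (H.image (fun c => (c.1 : ℕ))).min' hRne :=
    (Finset.mem_filter.1 hh0).2
  refine ⟨h0, hh0H, fun x hx => ⟨?_, ?_⟩⟩
  · rw [hh0r]
    exact Finset.min'_le _ _ (Finset.mem_image_of_mem _ hx)
  · intro hxr
    rw [hh0c]
    exact Finset.min'_le _ _
      (Finset.mem_image_of_mem _ (Finset.mem_filter.2 ⟨hx, hxr.trans hh0r⟩))

/-- Auxiliary: a nonempty finset of grid cells has a row-major (lexicographic) maximum. -/
lemma exists_lexmax {a b : ℕ} (H : Finset (Fin a × Fin b)) (h : H.Nonempty) :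
    ∃ h0 ∈ H, ∀ x ∈ H, ((x.1 : ℕ) ≤ (h0.1 : ℕ)) ∧
      ((x.1 : ℕ) = (h0.1 : ℕ) → (x.2 : ℕ) ≤ (h0.2 : ℕ)) := by
  classical
  have hRne : (H.image (fun c => (c.1 : ℕ))).Nonempty := h.image _
  have hH₁ne : (H.filter (fun c => (c.1 : ℕ) = (H.image (fun c => (c.1 : ℕ))).max' hRne)).Nonempty := by
    obtain ⟨x, hx, hxr⟩ := Finset.mem_image.1 (Finset.max'_mem _ hRne)
    exact ⟨x, Finset.mem_filter.2 ⟨hx, hxr⟩⟩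
  obtain ⟨h0, hh0, hh0c⟩ := Finset.mem_image.1
    (Finset.max'_mem
      ((H.filter (fun c => (c.1 : ℕ) = (H.image (fun c => (c.1 : ℕ))).max' hRne)).image
        (fun c => (c.2 : ℕ)))
      (hH₁ne.image _))
  have hh0H : h0 ∈ H := (Finset.mem_filter.1 hh0).1
  have hh0r : (h0.1 : ℕ) = (H.image (fun c => (c.1 : ℕ))).max' hRne :=
    (Finset.mem_filter.1 hh0).2
  refine ⟨h0, hh0H, fun x hx => ⟨?_, ?_⟩⟩
  · rw [hh0r]
    exact Finset.le_max' (H.image (fun c => (c.1 : ℕ))) _ (Finset.mem_image_of_mem _ hx)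
  · intro hxr
    rw [hh0c]
    exact Finset.le_max' _ _
      (by exact Finset.mem_image_of_mem _ (Finset.mem_filter.2 ⟨hx, hxr.trans hh0r⟩))

/-- an ambiguous grid state consistent with an ambiguous pattern with at
most 6 mines contains at most 5 flags. -/
theorem statement_8 {a b : ℕ} (P : Fin a × Fin b → Bool) (S : Fin a × Fin b → CellState)
    (hP : IsPattern P) (hm : numMines P ≤ 6)
    (hS : AmbiguousState S) (hcons : Consistent P S) :
    (Finset.univ.filter (fun c => S c = CellState.flag)).card ≤ 5 := by
  by_contra hlt
  push_neg at hlt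
  have hlt6 : 6 ≤ (Finset.univ.filter (fun c => S c = CellState.flag)).card := hlt
  -- flags are mines of any consistent assignment
  have flagMine : ∀ (Q : Fin a × Fin b → Bool), Consistent Q S →
      ∀ c, S c = CellState.flag → Q c = true := by
    intro Q hQ c hc
    rcases hQ c with h | ⟨k, hk, _⟩ | ⟨_, h⟩
    · rw [hc] at h; exact absurd h (fun hh => CellState.noConfusion hh)
    · rw [hc] at hk; exact absurd hk (fun hh => CellState.noConfusion hh)
    · exact h
  have clueVal : ∀ (Q : Fin a × Fin b → Bool), Consistent Q S →
      ∀ c k, S c = CellState.clue k → (k : ℕ) = mineCount Q c := by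
    intro Q hQ c k hc
    rcases hQ c with h | ⟨k', hk', hv⟩ | ⟨h, _⟩
    · rw [hc] at h; exact absurd h (fun hh => CellState.noConfusion hh)
    · rw [hc] at hk'
      have : k = k' := by injection hk'
      rw [this]; exact hv
    · rcases h with h | h <;> rw [hc] at h <;> exact absurd h (fun hh => CellState.noConfusion hh)
  -- flags = mines of P
  have hFM : (Finset.univ.filter (fun c => S c = CellState.flag))
      = (Finset.univ.filter (fun c => P c = true)) := by
    apply Finset.eq_of_subset_of_card_le
    · intro c hc
      simp only [Finset.mem_filter, Finset.mem_univ, true_and] at hc ⊢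
      exact flagMine P hcons c hc
    · calc (Finset.univ.filter (fun c => P c = true)).card = numMines P := rfl
        _ ≤ 6 := hm
        _ ≤ _ := hlt6
  have nbhd_symm : ∀ (x y : Fin a × Fin b), x ∈ nbhd y → y ∈ nbhd x := by
    intro x y h
    simp only [nbhd, Finset.mem_filter, Finset.mem_univ, true_and] at h ⊢
    omega
  -- central lemma about hidden cells
  have hHprop : ∀ c, S c = CellState.hidden →
      (2 ≤ (c.1 : ℕ) ∧ (c.1 : ℕ) + 3 ≤ a ∧ 2 ≤ (c.2 : ℕ) ∧ (c.2 : ℕ) + 3 ≤ b) ∧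
      ∀ d ∈ nbhd c, S d = CellState.hidden ∨ S d = CellState.flag := by
    intro c hc
    obtain ⟨P₁, P₂, hP₁, hP₂, hcons₁, hcons₂, hPt, hPf⟩ := hS.2.2 c hc
    refine ⟨hP₁.1 c hPt, ?_⟩
    intro d hd
    have hPc_false : P c = false := by
      by_contra h
      have hct : P c = true := by simpa using h
      have : c ∈ Finset.univ.filter (fun c => P c = true) := by
        simp [hct]
      rw [← hFM] at this
      simp only [Finset.mem_filter, Finset.mem_univ, true_and] at this
      rw [hc] at this
      exact CellState.noConfusion this
    rcases hdS : S d with _ | k | _ | _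
    · exact Or.inl rfl
    · exfalso
      have h1 : (k : ℕ) = mineCount P d := clueVal P hcons d k hdS
      have h2 : (k : ℕ) = mineCount P₁ d := clueVal P₁ hcons₁ d k hdS
      have hsub : ((nbhd d).filter (fun x => P x = true))
          ⊆ ((nbhd d).filter (fun x => P₁ x = true)) := by
        intro x hx
        simp only [Finset.mem_filter] at hx ⊢
        refine ⟨hx.1, ?_⟩
        have hxF : x ∈ Finset.univ.filter (fun c => S c = CellState.flag) := by
          rw [hFM]; simp [hx.2]
        simp only [Finset.mem_filter, Finset.mem_univ, true_and] at hxF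
        exact flagMine P₁ hcons₁ x hxF
      have hcmem : c ∈ nbhd d := nbhd_symm d c hd
      have hss : ((nbhd d).filter (fun x => P x = true))
          ⊂ ((nbhd d).filter (fun x => P₁ x = true)) := by
        refine (Finset.ssubset_iff_of_subset hsub).2 ⟨c, ?_, ?_⟩
        · simp [Finset.mem_filter, hcmem, hPt]
        · simp [Finset.mem_filter, hPc_false]
      have := Finset.card_lt_card hss
      unfold mineCount at h1 h2
      omega
    · exact Or.inr rfl
    · exact absurd hdS (hS.2.1 d)
  -- geometry: extremal hidden cells
  obtain ⟨c0, hc0⟩ := hS.1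
  have hHne : (Finset.univ.filter (fun c => S c = CellState.hidden)).Nonempty :=
    ⟨c0, by simp [hc0]⟩
  obtain ⟨h0, hh0H, hmin⟩ := exists_lexmin _ hHne
  obtain ⟨h3, hh3H, hmax⟩ := exists_lexmax _ hHne
  have hh0S : S h0 = CellState.hidden := by
    simpa using (Finset.mem_filter.1 hh0H).2
  have hh3S : S h3 = CellState.hidden := by
    simpa using (Finset.mem_filter.1 hh3H).2
  have hr12 : (h0.1 : ℕ) ≤ (h3.1 : ℕ) := (hmin h3 hh3H).1
  have hcc : (h3.1 : ℕ) = (h0.1 : ℕ) → (h0.2 : ℕ) ≤ (h3.2 : ℕ) := (hmin h3 hh3H).2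
  obtain ⟨⟨hb1, hb2, hb3, hb4⟩, hnb0⟩ := hHprop h0 hh0S
  obtain ⟨⟨hb5, hb6, hb7, hb8⟩, hnb3⟩ := hHprop h3 hh3S
  have notH : ∀ (y : Fin a × Fin b),
      ((y.1 : ℕ) < (h0.1 : ℕ) ∨ (h3.1 : ℕ) < (y.1 : ℕ)
        ∨ ((y.1 : ℕ) = (h0.1 : ℕ) ∧ (y.2 : ℕ) < (h0.2 : ℕ))
        ∨ ((y.1 : ℕ) = (h3.1 : ℕ) ∧ (h3.2 : ℕ) < (y.2 : ℕ))) →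
      S y ≠ CellState.hidden := by
    intro y hy hSy
    have hyH : y ∈ Finset.univ.filter (fun c => S c = CellState.hidden) := by simp [hSy]
    have l1 := hmin y hyH
    have l2 := hmax y hyH
    omega
  have getFlag : ∀ (h : Fin a × Fin b), S h = CellState.hidden →
      ∀ (y : Fin a × Fin b), y ∈ nbhd h → S y ≠ CellState.hidden →
      y ∈ Finset.univ.filter (fun c => S c = CellState.flag) := by
    intro h hh y hy hny
    rcases (hHprop h hh).2 y hy with h' | h'
    · exact absurd h' hny
    · simp [h']
  have mkmem : ∀ (y : Fin a × Fin b) (x : Fin a × Fin b),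
      ((x.1 : ℤ) - (y.1 : ℤ)).natAbs ≤ 1 → ((x.2 : ℤ) - (y.2 : ℤ)).natAbs ≤ 1 →
      y ∈ nbhd x := by
    intro y x h1 h2
    simp only [nbhd, Finset.mem_filter, Finset.mem_univ, true_and]
    exact ⟨h1, h2⟩
  -- the eight border cells
  have hA1F : ((⟨(h0.1 : ℕ) - 1, by omega⟩, ⟨(h0.2 : ℕ) - 1, by omega⟩) : Fin a × Fin b)
      ∈ Finset.univ.filter (fun c => S c = CellState.flag) :=
    getFlag h0 hh0S _ (mkmem _ h0 (by simp <;> omega) (by simp <;> omega))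
      (notH _ (by simp <;> omega))
  have hA2F : ((⟨(h0.1 : ℕ) - 1, by omega⟩, ⟨(h0.2 : ℕ), by omega⟩) : Fin a × Fin b)
      ∈ Finset.univ.filter (fun c => S c = CellState.flag) :=
    getFlag h0 hh0S _ (mkmem _ h0 (by simp <;> omega) (by simp <;> omega))
      (notH _ (by simp <;> omega))
  have hA3F : ((⟨(h0.1 : ℕ) - 1, by omega⟩, ⟨(h0.2 : ℕ) + 1, by omega⟩) : Fin a × Fin b)
      ∈ Finset.univ.filter (fun c => S c = CellState.flag) :=
    getFlag h0 hh0S _ (mkmem _ h0 (by simp <;> omega) (by simp <;> omega))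
      (notH _ (by simp <;> omega))
  have hA4F : ((⟨(h0.1 : ℕ), by omega⟩, ⟨(h0.2 : ℕ) - 1, by omega⟩) : Fin a × Fin b)
      ∈ Finset.univ.filter (fun c => S c = CellState.flag) :=
    getFlag h0 hh0S _ (mkmem _ h0 (by simp <;> omega) (by simp <;> omega))
      (notH _ (by simp <;> omega))
  have hB1F : ((⟨(h3.1 : ℕ) + 1, by omega⟩, ⟨(h3.2 : ℕ) - 1, by omega⟩) : Fin a × Fin b)
      ∈ Finset.univ.filter (fun c => S c = CellState.flag) :=
    getFlag h3 hh3S _ (mkmem _ h3 (by simp <;> omega) (by simp <;> omega))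
      (notH _ (by simp <;> omega))
  have hB2F : ((⟨(h3.1 : ℕ) + 1, by omega⟩, ⟨(h3.2 : ℕ), by omega⟩) : Fin a × Fin b)
      ∈ Finset.univ.filter (fun c => S c = CellState.flag) :=
    getFlag h3 hh3S _ (mkmem _ h3 (by simp <;> omega) (by simp <;> omega))
      (notH _ (by simp <;> omega))
  have hB3F : ((⟨(h3.1 : ℕ) + 1, by omega⟩, ⟨(h3.2 : ℕ) + 1, by omega⟩) : Fin a × Fin b)
      ∈ Finset.univ.filter (fun c => S c = CellState.flag) :=
    getFlag h3 hh3S _ (mkmem _ h3 (by simp <;> omega) (by simp <;> omega))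
      (notH _ (by simp <;> omega))
  have hB4F : ((⟨(h3.1 : ℕ), by omega⟩, ⟨(h3.2 : ℕ) + 1, by omega⟩) : Fin a × Fin b)
      ∈ Finset.univ.filter (fun c => S c = CellState.flag) :=
    getFlag h3 hh3S _ (mkmem _ h3 (by simp <;> omega) (by simp <;> omega))
      (notH _ (by simp <;> omega))
  set L : List (Fin a × Fin b) :=
    [(⟨(h0.1 : ℕ) - 1, by omega⟩, ⟨(h0.2 : ℕ) - 1, by omega⟩),
     (⟨(h0.1 : ℕ) - 1, by omega⟩, ⟨(h0.2 : ℕ), by omega⟩),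
     (⟨(h0.1 : ℕ) - 1, by omega⟩, ⟨(h0.2 : ℕ) + 1, by omega⟩),
     (⟨(h0.1 : ℕ), by omega⟩, ⟨(h0.2 : ℕ) - 1, by omega⟩),
     (⟨(h3.1 : ℕ) + 1, by omega⟩, ⟨(h3.2 : ℕ) - 1, by omega⟩),
     (⟨(h3.1 : ℕ) + 1, by omega⟩, ⟨(h3.2 : ℕ), by omega⟩),
     (⟨(h3.1 : ℕ) + 1, by omega⟩, ⟨(h3.2 : ℕ) + 1, by omega⟩),
     (⟨(h3.1 : ℕ), by omega⟩, ⟨(h3.2 : ℕ) + 1, by omega⟩)] with hLdef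
  have hnd : L.Nodup := by
    rw [hLdef]
    simp only [List.nodup_cons, List.mem_cons, List.not_mem_nil, or_false, not_or,
      Prod.mk.injEq, Fin.mk.injEq, List.nodup_nil, and_true, not_and, not_false_eq_true]
    repeat' apply And.intro
    all_goals omega
  have hsub : L.toFinset ⊆ Finset.univ.filter (fun c => S c = CellState.flag) := by
    intro x hx
    rw [hLdef] at hx
    simp only [List.mem_toFinset, List.mem_cons, List.not_mem_nil, or_false] at hx
    rcases hx with rfl | rfl | rfl | rfl | rfl | rfl | rfl | rfl <;> assumption
  have h8 : 8 ≤ (Finset.univ.filter (fun c => S c = CellState.flag)).card := by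
    calc (8 : ℕ) = L.length := by rw [hLdef]; rfl
      _ = L.toFinset.card := (List.toFinset_card_of_nodup hnd).symm
      _ ≤ _ := Finset.card_le_card hsub
  have h6 : (Finset.univ.filter (fun c => S c = CellState.flag)).card ≤ 6 := by
    rw [hFM]; exact hm
  omega

end Minesweeper
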